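/- Let $\lambda > 0$ and let $A$, $B$, $C$ be points on the unit circle with $AB$ the shortest side of triangle $ABC$. Let $M'$ be the intersection of the perpendicular bisector of $AB$ with the unit circle on the far arc (so that $\angle BAM' = \angle ABM' \ge \pi/3$). Then $M'A^{\lambda} + M'B^{\lambda} + M'C^{\lambda} \ge 2(\sqrt{3})^{\lambda}$, with equality only if $ABC$ is equilateral. -/

import Mathlib

open EuclideanGeometry Real

noncomputable section

local instance factFinrank : Fact (Module.finrank ℝ (EuclideanSpace ℝ (Fin 2)) = 2) :=
  ⟨finrank_euclideanSpace_fin⟩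

local instance orientedE2 : Module.Oriented ℝ (EuclideanSpace ℝ (Fin 2)) (Fin 2) :=
  ⟨Module.Basis.orientation (EuclideanSpace.basisFun (Fin 2) ℝ).toBasis⟩

/-- Law of sines on the unit circle: a chord equals twice the sine of the inscribed angle. -/
lemma chord_eq_two_mul_sin_angle {p1 p2 p3 : EuclideanSpace ℝ (Fin 2)}
    (h1 : p1 ∈ Metric.sphere (0 : EuclideanSpace ℝ (Fin 2)) 1)
    (h2 : p2 ∈ Metric.sphere (0 : EuclideanSpace ℝ (Fin 2)) 1)
    (h3 : p3 ∈ Metric.sphere (0 : EuclideanSpace ℝ (Fin 2)) 1)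
    (h12 : p1 ≠ p2) (h13 : p1 ≠ p3) (h23 : p2 ≠ p3) :
    dist p1 p3 = 2 * Real.sin (∠ p1 p2 p3) := by
  set s : EuclideanGeometry.Sphere (EuclideanSpace ℝ (Fin 2)) := ⟨0, 1⟩ with hs
  have hm1 : p1 ∈ s := by rw [EuclideanGeometry.mem_sphere]; simpa [hs] using h1
  have hm2 : p2 ∈ s := by rw [EuclideanGeometry.mem_sphere]; simpa [hs] using h2
  have hm3 : p3 ∈ s := by rw [EuclideanGeometry.mem_sphere]; simpa [hs] using h3
  have key := EuclideanGeometry.Sphere.dist_div_sin_oangle_eq_two_mul_radius hm1 hm2 hm3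
    h12 h13 h23
  have hrad : s.radius = 1 := rfl
  rw [hrad, mul_one] at key
  have hang : ∠ p1 p2 p3 = |(∡ p1 p2 p3).toReal| :=
    EuclideanGeometry.angle_eq_abs_oangle_toReal h12 h23.symm
  have hsin : Real.sin (∠ p1 p2 p3) = |Real.Angle.sin (∡ p1 p2 p3)| := by
    have h1' : Real.Angle.sin (∡ p1 p2 p3) = Real.sin (∡ p1 p2 p3).toReal := by
      conv_lhs => rw [← Real.Angle.coe_toReal (∡ p1 p2 p3)]
      rw [Real.Angle.sin_coe]
    rw [hang, h1']
    set t := (∡ p1 p2 p3).toReal with ht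
    have htpi : t ≤ π := Real.Angle.toReal_le_pi _
    have htnpi : -π < t := Real.Angle.neg_pi_lt_toReal _
    rcases le_or_gt 0 t with h | h
    · rw [abs_of_nonneg h, abs_of_nonneg (Real.sin_nonneg_of_nonneg_of_le_pi h htpi)]
    · rw [abs_of_neg h, abs_of_nonpos (Real.sin_nonpos_of_nonpos_of_neg_pi_le h.le htnpi.le),
        Real.sin_neg]
  rw [← hsin] at key
  have hne : Real.sin (∠ p1 p2 p3) ≠ 0 := by
    intro h0
    rw [h0, div_zero] at key
    norm_num at key
  rw [div_eq_iff hne] at key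
  linarith [key]

end

theorem stmt_18 (A B C M' : EuclideanSpace ℝ (Fin 2))
    (hA : A ∈ Metric.sphere (0 : EuclideanSpace ℝ (Fin 2)) 1)
    (hB : B ∈ Metric.sphere (0 : EuclideanSpace ℝ (Fin 2)) 1)
    (hC : C ∈ Metric.sphere (0 : EuclideanSpace ℝ (Fin 2)) 1)
    (hM : M' ∈ Metric.sphere (0 : EuclideanSpace ℝ (Fin 2)) 1)
    (hAB : A ≠ B) (hBC : B ≠ C) (hCA : C ≠ A)
    (hshort1 : dist A B ≤ dist B C) (hshort2 : dist A B ≤ dist C A)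
    (hiso : EuclideanGeometry.angle B A M' = EuclideanGeometry.angle A B M')
    (hfar : Real.pi / 3 ≤ EuclideanGeometry.angle B A M')
    (lam : ℝ) (hlam : 0 < lam) :
    2 * Real.sqrt 3 ^ lam ≤ dist M' A ^ lam + dist M' B ^ lam + dist M' C ^ lam ∧
    (dist M' A ^ lam + dist M' B ^ lam + dist M' C ^ lam = 2 * Real.sqrt 3 ^ lam →
      dist A B = dist B C ∧ dist B C = dist C A) := by
  have hpi : (0:ℝ) < Real.pi := Real.pi_pos
  -- M' ≠ A and M' ≠ B
  have hMA : M' ≠ A := by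
    rintro rfl
    rw [EuclideanGeometry.angle_self_right, EuclideanGeometry.angle_self_of_ne hAB] at hiso
    linarith
  have hMB : M' ≠ B := by
    rintro rfl
    rw [EuclideanGeometry.angle_self_of_ne hAB.symm, EuclideanGeometry.angle_self_right] at hiso
    linarith
  -- angle sum in triangle M' A B
  have hsum : ∠ M' A B + ∠ A B M' + ∠ B M' A = Real.pi :=
    EuclideanGeometry.angle_add_angle_add_angle_eq_pi B hMA.symm
  have hMAB : ∠ M' A B = ∠ B A M' := EuclideanGeometry.angle_comm _ _ _
  set x := ∠ B A M' with hx
  have hiso' : ∠ A B M' = x := hiso.symm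
  have hangC : ∠ B M' A = Real.pi - 2 * x := by
    rw [hMAB, hiso'] at hsum; linarith
  have hCnonneg : 0 ≤ ∠ B M' A := EuclideanGeometry.angle_nonneg _ _ _
  have hxle : x ≤ Real.pi / 2 := by rw [hangC] at hCnonneg; linarith
  -- isosceles: dist M' A = dist M' B
  have hisodist : dist M' A = dist M' B := by
    apply EuclideanGeometry.dist_eq_of_angle_eq_angle_of_angle_ne_pi
    · rw [hMAB, EuclideanGeometry.angle_comm M' B A]; exact hiso
    · rw [EuclideanGeometry.angle_comm A M' B, hangC]; intro h; linarith
  -- law of sines: dist M' B = 2 sin x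
  have hchord : dist M' B = 2 * Real.sin x := by
    have := chord_eq_two_mul_sin_angle hM hA hB hMA hMB hAB
    rwa [EuclideanGeometry.angle_comm M' A B, ← hx] at this
  -- 2 sin x ≥ √3
  have hsinx : Real.sqrt 3 / 2 ≤ Real.sin x := by
    have h3 : Real.sin (Real.pi / 3) = Real.sqrt 3 / 2 := Real.sin_pi_div_three
    rw [← h3]
    apply Real.strictMonoOn_sin.monotoneOn
    · constructor <;> [linarith; linarith]
    · constructor <;> [linarith [EuclideanGeometry.angle_nonneg B A M']; exact hxle]
    · exact hfar
  have hMBge : Real.sqrt 3 ≤ dist M' B := by rw [hchord]; linarith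
  have hMAge : Real.sqrt 3 ≤ dist M' A := by rw [hisodist]; exact hMBge
  have hs3 : (0:ℝ) ≤ Real.sqrt 3 := Real.sqrt_nonneg 3
  have hA1 : Real.sqrt 3 ^ lam ≤ dist M' A ^ lam := Real.rpow_le_rpow hs3 hMAge hlam.le
  have hB1 : Real.sqrt 3 ^ lam ≤ dist M' B ^ lam := Real.rpow_le_rpow hs3 hMBge hlam.le
  have hC1 : (0:ℝ) ≤ dist M' C ^ lam := Real.rpow_nonneg dist_nonneg lam
  constructor
  · linarith
  · intro heq
    -- equality forces dist M' C = 0, dist M' A = dist M' B = √3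
    have hCzero : dist M' C ^ lam = 0 := by linarith
    have hMC : M' = C := by
      have := (Real.rpow_eq_zero dist_nonneg hlam.ne').1 hCzero
      exact dist_eq_zero.1 this
    have hMAeq : dist M' A = Real.sqrt 3 := by
      by_contra h
      have hlt : Real.sqrt 3 < dist M' A := lt_of_le_of_ne hMAge (Ne.symm h)
      have := Real.rpow_lt_rpow hs3 hlt hlam
      linarith
    have hMBeq : dist M' B = Real.sqrt 3 := hisodist ▸ hMAeq
    -- sin x = √3/2 and x ∈ [π/3, π/2] forces x = π/3
    have hsineq : Real.sin x = Real.sqrt 3 / 2 := by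
      rw [hMBeq] at hchord; linarith
    have hxeq : x = Real.pi / 3 := by
      apply Real.injOn_sin
      · constructor <;> [linarith [EuclideanGeometry.angle_nonneg B A M']; exact hxle]
      · constructor <;> [linarith; linarith]
      · rw [hsineq, Real.sin_pi_div_three]
    -- angle at M' is π/3; law of cosines gives dist A B = √3
    have hangC' : ∠ A M' B = Real.pi / 3 := by
      rw [EuclideanGeometry.angle_comm A M' B, hangC, hxeq]; ring
    have hlaw := EuclideanGeometry.law_cos A M' B
    rw [hangC', Real.cos_pi_div_three, dist_comm A M', dist_comm B M', hMAeq, hMBeq] at hlaw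
    have h33 : Real.sqrt 3 * Real.sqrt 3 = 3 := Real.mul_self_sqrt (by norm_num)
    have hABsq : dist A B ^ 2 = 3 := by rw [pow_two, hlaw]; linarith
    have hABeq : dist A B = Real.sqrt 3 := by
      rw [← Real.sqrt_sq (dist_nonneg : (0:ℝ) ≤ dist A B), hABsq]
    subst hMC
    rw [hABeq, dist_comm B M', hMBeq, hMAeq]
    exact ⟨rfl, rfl⟩
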